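/- Let r be a closed g-term, p ∈ SCC(r), and σ a substitution list such that r[p]σ is closed. Let q₁, q₂ ∈ valid(r[p]) be positions that are locally closed in r[p] and satisfy ⟨r[p]⟩q₁ = ⟨r[p]⟩q₂. Then globalize_step(r, σ, r[p])[q₁] = globalize_step(r, σ, r[p])[q₂]. -/
import Mathlib


namespace HashAlpha

/-- g-terms: λ-terms with de Bruijn indices, extended with global variables `gvar t`. -/
inductive GTerm : Type
  | var : ℕ → GTerm
  | app : GTerm → GTerm → GTerm
  | lam : GTerm → GTerm
  | gvar : GTerm → GTerm
  deriving DecidableEq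

/-- A g-term is a pure λ-term if it contains no global variables. -/
def GTerm.IsPure : GTerm → Prop
  | .var _ => True
  | .app a b => a.IsPure ∧ b.IsPure
  | .lam a => a.IsPure
  | .gvar _ => False

/-- Directions for term positions: ↓, ↙, ↘. -/
inductive Dir : Type
  | down | left | right
  deriving DecidableEq

/-- A term position is a word over {↓, ↙, ↘}. -/
abbrev Pos := List Dir

/-- `|p|_λ`: the number of ↓'s in a position. -/
def lamDepth (p : Pos) : ℕ := p.count Dir.down

/-- Term indexing `t[p]` (partial; does not descend into global variables). -/
def GTerm.index : GTerm → Pos → Option GTerm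
  | t, [] => some t
  | .app a _, .left :: p => a.index p
  | .app _ b, .right :: p => b.index p
  | .lam a, .down :: p => a.index p
  | _, _ => none

/-- `valid(t)`: the set of positions where `t[p]` is defined. -/
def Valid (t : GTerm) : Set Pos := {p | (t.index p).isSome}

/-- `vars(t)`: positions of variables. -/
def Vars (t : GTerm) : Set Pos := {p | ∃ i, t.index p = some (.var i)}

/-- `free(t)`: positions of free variables. -/
def Free (t : GTerm) : Set Pos :=
  {p | ∃ i, t.index p = some (.var i) ∧ lamDepth p ≤ i}

/-- A term is closed if it has no free variables. -/
def Closed (t : GTerm) : Prop := Free t = ∅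

/-- `p` is locally closed in `t`: every free variable of `t[p]` is also free in `t`. -/
def LocallyClosed (t : GTerm) (p : Pos) : Prop :=
  p ∈ Valid t ∧ ∀ u, t.index p = some u → ∀ q ∈ Free u, p ++ q ∈ Free t

/-- Subtract `d0` from every free variable (`d` is the current binder depth). -/
def declift (d0 : ℕ) : GTerm → ℕ → GTerm
  | .var j, d => if d ≤ j then .var (j - d0) else .var j
  | .app a b, d => .app (declift d0 a d) (declift d0 b d)
  | .lam a, d => .lam (declift d0 a (d + 1))
  | .gvar a, _ => .gvar a

/-- The lift `⟨t⟩p`: equal to `t[p]` except every free variable of `t[p]` is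
decremented by `|p|_λ`. -/
def liftAt (t : GTerm) (p : Pos) : Option GTerm :=
  (t.index p).map (fun u => declift (lamDepth p) u 0)

/-- Transition labels: ↓, ↙, ↘ and ↑. -/
inductive Lab : Type
  | down | left | right | up
  deriving DecidableEq

def Lab.ofDir : Dir → Lab
  | .down => .down
  | .left => .left
  | .right => .right

/-- Transitions between term nodes. -/
inductive Trans : GTerm × Pos → Lab → GTerm × Pos → Prop
  | dir (t : GTerm) (p : Pos) (x : Dir) :
      (p ++ [x]) ∈ Valid t → Trans (t, p) (Lab.ofDir x) (t, p ++ [x])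
  | up (t : GTerm) (q r : Pos) :
      t.index (q ++ Dir.down :: r) = some (.var (lamDepth r)) →
      Trans (t, q ++ Dir.down :: r) Lab.up (t, q)

/-- `R` is a bisimulation. -/
def IsBisim (R : GTerm × Pos → GTerm × Pos → Prop) : Prop :=
  ∀ n₁ n₂, R n₁ n₂ → ∀ x : Lab,
    (∀ n₁', Trans n₁ x n₁' → ∃ n₂', Trans n₂ x n₂' ∧ R n₁' n₂') ∧
    (∀ n₂', Trans n₂ x n₂' → ∃ n₁', Trans n₁ x n₁' ∧ R n₁' n₂')

/-- Two nodes are bisimilar when some bisimulation relates them. -/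
def Bisim (n₁ n₂ : GTerm × Pos) : Prop := ∃ R, IsBisim R ∧ R n₁ n₂

/-- `(t, p)` is a term node: `t` is closed and `p ∈ valid(t)`. -/
def IsNode (t : GTerm) (p : Pos) : Prop := Closed t ∧ p ∈ Valid t

/-- A single fork between term nodes (let-abs rule or closed rule). -/
def SingleFork (n₁ n₂ : GTerm × Pos) : Prop :=
  (∃ t p q₁ q₂ r u,
      n₁ = (t, p ++ q₁ ++ r) ∧ n₂ = (t, p ++ q₂ ++ r) ∧
      IsNode t (p ++ q₁ ++ r) ∧ IsNode t (p ++ q₂ ++ r) ∧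
      t.index p = some u ∧ LocallyClosed u q₁ ∧ liftAt u q₁ = liftAt u q₂) ∨
  (∃ t₁ t₂ p₁ p₂ r u,
      n₁ = (t₁, p₁ ++ r) ∧ n₂ = (t₂, p₂ ++ r) ∧
      IsNode t₁ (p₁ ++ r) ∧ IsNode t₂ (p₂ ++ r) ∧
      t₁.index p₁ = some u ∧ Closed u ∧ t₂.index p₂ = some u)

/-- Fork equivalence: the transitive closure of single forks. -/
def ForkEquiv : GTerm × Pos → GTerm × Pos → Prop := Relation.TransGen SingleFork

/-- Shift free variables ≥ `c` up by `d`. -/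
def shiftAux (c d : ℕ) : GTerm → GTerm
  | .var j => if j < c then .var j else .var (j + d)
  | .app a b => .app (shiftAux c d a) (shiftAux c d b)
  | .lam a => .lam (shiftAux (c + 1) d a)
  | .gvar a => .gvar a

/-- Capture-avoiding substitution of free variable `i` by `u` (at current depth `d`). -/
def substAux (i : ℕ) (u : GTerm) : ℕ → GTerm → GTerm
  | d, .var j => if j = i + d then shiftAux 0 d u else .var j
  | d, .app a b => .app (substAux i u d a) (substAux i u d b)
  | d, .lam a => .lam (substAux i u (d + 1) a)
  | _, .gvar a => .gvar a

/-- `t[i := u]`: capture-avoiding substitution of variable `i` by `u` in `t`. -/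
def subst (i : ℕ) (u : GTerm) (t : GTerm) : GTerm := substAux i u 0 t

/-- Simultaneous capture-avoiding substitution of variable `i` by `σᵢ`
(at current depth `d`). -/
def msubstAux (σ : List GTerm) : ℕ → GTerm → GTerm
  | d, .var j =>
      if j < d then .var j else shiftAux 0 d (σ.getD (j - d) (.var (j - d)))
  | d, .app a b => .app (msubstAux σ d a) (msubstAux σ d b)
  | d, .lam a => .lam (msubstAux σ (d + 1) a)
  | _, .gvar a => .gvar a

/-- `tσ`: simultaneous substitution of each variable `i` by the `i`-th element of `σ`. -/
def msubst (σ : List GTerm) (t : GTerm) : GTerm := msubstAux σ 0 t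

/-- Term size (the term summary `|t|`); global variables count as leaves. -/
def gsize : GTerm → ℕ
  | .var _ => 1
  | .gvar _ => 1
  | .app a b => gsize a + gsize b + 1
  | .lam a => gsize a + 1

theorem gsize_shiftAux (c d : ℕ) (t : GTerm) : gsize (shiftAux c d t) = gsize t := by
  induction t generalizing c with
  | var j => simp only [shiftAux]; split <;> rfl
  | app a b iha ihb => simp [shiftAux, gsize, iha, ihb]
  | lam a ih => simp [shiftAux, gsize, ih]
  | gvar a => rfl

theorem gsize_substAux_gvar (i : ℕ) (w : GTerm) (d : ℕ) (t : GTerm) :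
    gsize (substAux i (.gvar w) d t) = gsize t := by
  induction t generalizing d with
  | var j => simp only [substAux]; split <;> rfl
  | app a b iha ihb => simp [substAux, gsize, iha, ihb]
  | lam a ih => simp [substAux, gsize, ih]
  | gvar a => rfl

theorem gsize_msubstAux (σ : List GTerm) (h : ∀ u ∈ σ, ∃ w, u = .gvar w)
    (d : ℕ) (t : GTerm) : gsize (msubstAux σ d t) = gsize t := by
  induction t generalizing d with
  | var j =>
    simp only [msubstAux]
    split
    · rfl
    · rw [gsize_shiftAux]
      rcases Nat.lt_or_ge (j - d) σ.length with hl | hl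
      · rw [List.getD_eq_getElem _ _ hl]
        obtain ⟨w, hw⟩ := h _ (List.getElem_mem hl)
        rw [hw]; rfl
      · rw [List.getD_eq_default _ _ hl]; rfl
  | app a b iha ihb => simp [msubstAux, gsize, iha, ihb]
  | lam a ih => simp [msubstAux, gsize, ih]
  | gvar a => rfl

theorem gsize_msubst (σ : List GTerm) (h : ∀ u ∈ σ, ∃ w, u = .gvar w)
    (t : GTerm) : gsize (msubst σ t) = gsize t :=
  gsize_msubstAux σ h 0 t

/-- The naive globalization procedure. -/
def globalizeNaive : GTerm → GTerm
  | .lam t => .lam (globalizeNaive (subst 0 (.gvar (.lam t)) t))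
  | .app t u => .app (globalizeNaive t) (globalizeNaive u)
  | .gvar t => .gvar t
  | .var i => .var i
termination_by t => gsize t
decreasing_by
  · simp only [subst, gsize_substAux_gvar, gsize]; omega
  · simp only [gsize]; omega
  · simp only [gsize]; omega

/-- The strongly connected component of a closed g-term: positions all of whose
nonempty prefixes index open terms. -/
def SCC (t : GTerm) : Set Pos :=
  {p | p ∈ Valid t ∧ ∀ p' u, p' ≠ [] → p' <+: p → t.index p' = some u → ¬ Closed u}

/-- `duplicates(t)`: strict subterms in the SCC of `t` whose term summary (size)
is not unique within the SCC. -/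
def duplicates (t : GTerm) : Set GTerm :=
  {u | ∃ p q v, p ∈ SCC t ∧ q ∈ SCC t ∧ p ≠ [] ∧ q ≠ [] ∧ p ≠ q ∧
      t.index p = some u ∧ t.index q = some v ∧ gsize u = gsize v}

open Classical in
mutual
/-- Efficient globalization. -/
noncomputable def globalize (r : GTerm) : GTerm :=
  globalizeScc r [] (by simp) r
termination_by (gsize r, 2)
decreasing_by
  apply Prod.Lex.right; omega

noncomputable def globalizeScc (r : GTerm) (σ : List GTerm)
    (h : ∀ u ∈ σ, ∃ w, u = GTerm.gvar w) : GTerm → GTerm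
  | .lam t => .lam (globalizeStep r (.gvar (.app r t) :: σ)
      (by
        intro u hu
        rcases List.mem_cons.mp hu with h' | h'
        · exact ⟨_, h'⟩
        · exact h u h') t)
  | .app t u => .app (globalizeStep r σ h t) (globalizeStep r σ h u)
  | .gvar t => .gvar t
  | .var i => msubst σ (.var i)
termination_by t => (gsize t, 1)
decreasing_by
  · apply Prod.Lex.left; simp only [gsize]; omega
  · apply Prod.Lex.left; simp only [gsize]; omega
  · apply Prod.Lex.left; simp only [gsize]; omega

noncomputable def globalizeStep (r : GTerm) (σ : List GTerm)
    (h : ∀ u ∈ σ, ∃ w, u = GTerm.gvar w) (t : GTerm) : GTerm :=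
  if Closed t ∨ t ∈ duplicates r then globalize (msubst σ t)
  else globalizeScc r σ h t
termination_by (gsize t, 3)
decreasing_by
  · rw [gsize_msubst σ h]; apply Prod.Lex.right; omega
  · apply Prod.Lex.right; omega
end

/-! ### Auxiliary development for Statement 17 -/

theorem step_pos (r σ h u) (hc : Closed u ∨ u ∈ duplicates r) :
    globalizeStep r σ h u = globalize (msubst σ u) := by
  rw [globalizeStep]; exact if_pos hc

theorem step_neg (r σ h u) (hc : ¬(Closed u ∨ u ∈ duplicates r)) :
    globalizeStep r σ h u = globalizeScc r σ h u := by
  rw [globalizeStep]; exact if_neg hc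

theorem glob_eq (r) : globalize r = globalizeScc r [] (by simp) r := by rw [globalize]

theorem scc_app (r σ h a b) : globalizeScc r σ h (.app a b) =
    .app (globalizeStep r σ h a) (globalizeStep r σ h b) := by
  rw [globalizeScc]

theorem scc_lam (r σ h t) : globalizeScc r σ h (.lam t) =
    .lam (globalizeStep r (.gvar (.app r t) :: σ)
      (by intro u hu; rcases List.mem_cons.mp hu with h' | h'; exact ⟨_, h'⟩; exact h u h') t) := by
  rw [globalizeScc]

theorem lamDepth_nil : lamDepth ([] : Pos) = 0 := rfl

theorem lamDepth_cons (d : Dir) (p : Pos) :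
    lamDepth (d :: p) = lamDepth p + (if d = Dir.down then 1 else 0) := by
  simp [lamDepth, List.count_cons]

theorem lamDepth_append (a b : Pos) : lamDepth (a ++ b) = lamDepth a + lamDepth b := by
  simp [lamDepth]

theorem index_append (a b : Pos) : ∀ t : GTerm,
    t.index (a ++ b) = (t.index a).bind (fun u => u.index b) := by
  induction a with
  | nil => intro t; simp [GTerm.index]
  | cons d a ih =>
    intro t
    cases t <;> cases d <;> simp [GTerm.index, ih]

/-- Syntactic closedness below depth `d`. -/
def ClosedAt : GTerm → ℕ → Prop
  | .var j, d => j < d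
  | .app a b, d => ClosedAt a d ∧ ClosedAt b d
  | .lam a, d => ClosedAt a (d + 1)
  | .gvar _, _ => True

/-- All variables at local depth `d'` are either bound (`< d'`) or refer at least
`D` binders above the root and within range `L` beyond that. -/
def GoodT (L D : ℕ) : GTerm → ℕ → Prop
  | .var j, d => j < d ∨ (D + d ≤ j ∧ j - (D + d) < L)
  | .app a b, d => GoodT L D a d ∧ GoodT L D b d
  | .lam a, d => GoodT L D a (d + 1)
  | .gvar _, _ => True

theorem closedAt_iff : ∀ (w : GTerm) (d : ℕ),
    ClosedAt w d ↔ ∀ z i, w.index z = some (.var i) → i < lamDepth z + d := by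
  intro w
  induction w with
  | var j =>
    intro d
    constructor
    · intro h z i hz
      cases z with
      | nil =>
        simp [GTerm.index] at hz
        simp [lamDepth_nil, ← hz, ClosedAt] at h ⊢
        omega
      | cons x z => simp [GTerm.index] at hz
    · intro h
      have := h [] j (by simp [GTerm.index])
      simpa [ClosedAt, lamDepth_nil] using this
  | app a b iha ihb =>
    intro d
    constructor
    · rintro ⟨ha, hb⟩ z i hz
      cases z with
      | nil => simp [GTerm.index] at hz
      | cons x z =>
        cases x with
        | left =>
          simp only [GTerm.index] at hz
          have := (iha d).mp ha z i hz
          simp [lamDepth_cons]; omega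
        | right =>
          simp only [GTerm.index] at hz
          have := (ihb d).mp hb z i hz
          simp [lamDepth_cons]; omega
        | down => simp [GTerm.index] at hz
    · intro h
      refine ⟨(iha d).mpr ?_, (ihb d).mpr ?_⟩
      · intro z i hz
        have := h (Dir.left :: z) i (by simpa [GTerm.index] using hz)
        simp [lamDepth_cons] at this; omega
      · intro z i hz
        have := h (Dir.right :: z) i (by simpa [GTerm.index] using hz)
        simp [lamDepth_cons] at this; omega
  | lam a ih =>
    intro d
    constructor
    · intro ha z i hz
      cases z with
      | nil => simp [GTerm.index] at hz
      | cons x z =>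
        cases x with
        | down =>
          simp only [GTerm.index] at hz
          have := (ih (d + 1)).mp ha z i hz
          simp [lamDepth_cons]; omega
        | left => simp [GTerm.index] at hz
        | right => simp [GTerm.index] at hz
    · intro h
      refine (ih (d + 1)).mpr ?_
      intro z i hz
      have := h (Dir.down :: z) i (by simpa [GTerm.index] using hz)
      simp [lamDepth_cons] at this; omega
  | gvar a ih =>
    intro d
    constructor
    · intro _ z i hz
      cases z with
      | nil => simp [GTerm.index] at hz
      | cons x z => simp [GTerm.index] at hz
    · intro _; trivial

theorem closed_iff (w : GTerm) : Closed w ↔ ClosedAt w 0 := by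
  rw [Closed, Set.eq_empty_iff_forall_notMem, closedAt_iff]
  constructor
  · intro h z i hz
    by_contra hc
    exact h z ⟨i, hz, by omega⟩
  · rintro h z ⟨i, hz, hle⟩
    have := h z i hz; omega

theorem not_closedAt (w : GTerm) (h : ¬ClosedAt w 0) :
    ∃ z i, w.index z = some (.var i) ∧ lamDepth z ≤ i := by
  by_contra hc
  push_neg at hc
  exact h ((closedAt_iff w 0).mpr (by intro z i hz; have := hc z i hz; omega))

theorem goodT_of_forall (L D : ℕ) : ∀ (w : GTerm) (d : ℕ),
    (∀ z i, w.index z = some (.var i) →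
      i < lamDepth z + d ∨ (D + (lamDepth z + d) ≤ i ∧ i - (D + (lamDepth z + d)) < L)) →
    GoodT L D w d := by
  intro w
  induction w with
  | var j =>
    intro d h
    have := h [] j (by simp [GTerm.index])
    simpa [GoodT, lamDepth_nil] using this
  | app a b iha ihb =>
    intro d h
    refine ⟨iha d ?_, ihb d ?_⟩
    · intro z i hz
      have := h (Dir.left :: z) i (by simpa [GTerm.index] using hz)
      simp [lamDepth_cons] at this ⊢; omega
    · intro z i hz
      have := h (Dir.right :: z) i (by simpa [GTerm.index] using hz)
      simp [lamDepth_cons] at this ⊢; omega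
  | lam a ih =>
    intro d h
    refine ih (d + 1) ?_
    intro z i hz
    have := h (Dir.down :: z) i (by simpa [GTerm.index] using hz)
    simp [lamDepth_cons] at this ⊢; omega
  | gvar a ih => intro d h; trivial

theorem shiftAux_gvar (c d : ℕ) (t : GTerm) : shiftAux c d (.gvar t) = .gvar t := rfl

theorem getD_gvar (σ : List GTerm) (hσ : ∀ v ∈ σ, ∃ w, v = GTerm.gvar w)
    (k : ℕ) (hk : k < σ.length) : ∃ w, σ.getD k (.var (k)) = .gvar w ∧
      ∀ c d, shiftAux c d (σ.getD k (.var k)) = σ.getD k (.var k) := by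
  obtain ⟨w, hw⟩ := hσ _ (List.getElem_mem hk)
  rw [List.getD_eq_getElem _ _ hk, hw]
  exact ⟨w, rfl, fun c d => rfl⟩

/-- `getD` agnostic version: for `k < σ.length` the entry is a gvar and shift-invariant. -/
theorem entry_eq (σ : List GTerm) (hσ : ∀ v ∈ σ, ∃ w, v = GTerm.gvar w)
    (k : ℕ) (hk : k < σ.length) (dflt₁ dflt₂ : GTerm) (c₁ d₁ c₂ d₂ : ℕ) :
    shiftAux c₁ d₁ (σ.getD k dflt₁) = shiftAux c₂ d₂ (σ.getD k dflt₂) := by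
  obtain ⟨w, hw⟩ := hσ _ (List.getElem_mem hk)
  rw [List.getD_eq_getElem _ _ hk, List.getD_eq_getElem _ _ hk, hw]
  rfl

theorem msubstAux_index (σ : List GTerm) (hσ : ∀ v ∈ σ, ∃ w, v = GTerm.gvar w) :
    ∀ (q : Pos) (u : GTerm) (D : ℕ),
    (msubstAux σ D u).index q = (u.index q).map (fun w => msubstAux σ (D + lamDepth q) w) := by
  intro q
  induction q with
  | nil => intro u D; simp [GTerm.index, lamDepth_nil]
  | cons d q ih =>
    intro u D
    cases u with
    | var j =>
      simp only [msubstAux]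
      split
      · simp [GTerm.index]
      · rename_i hj
        rcases Nat.lt_or_ge (j - D) σ.length with hl | hl
        · obtain ⟨w, hw⟩ := hσ _ (List.getElem_mem hl)
          rw [List.getD_eq_getElem _ _ hl, hw]
          simp [GTerm.index, shiftAux]
        · rw [List.getD_eq_default _ _ hl]
          simp [GTerm.index, shiftAux]
    | app a b =>
      cases d with
      | left => simp only [msubstAux, GTerm.index, ih]; rfl
      | right => simp only [msubstAux, GTerm.index, ih]; rfl
      | down => simp [msubstAux, GTerm.index]
    | lam a =>
      cases d with
      | down =>
        simp only [msubstAux, GTerm.index, ih]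
        rw [show D + 1 + lamDepth q = D + lamDepth (Dir.down :: q) from by
          simp [lamDepth_cons]; omega]
      | left => simp [msubstAux, GTerm.index]
      | right => simp [msubstAux, GTerm.index]
    | gvar a => cases d <;> simp [msubstAux, GTerm.index]

theorem msubstAux_closedAt (σ : List GTerm) :
    ∀ (w : GTerm) (d D : ℕ), ClosedAt w d → d ≤ D → msubstAux σ D w = w := by
  intro w
  induction w with
  | var j => intro d D h hd; simp only [ClosedAt] at h; simp [msubstAux]; omega
  | app a b iha ihb =>
    intro d D h hd
    simp only [ClosedAt] at h
    simp [msubstAux, iha d D h.1 hd, ihb d D h.2 hd]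
  | lam a ih =>
    intro d D h hd
    simp only [ClosedAt] at h
    simp [msubstAux, ih (d + 1) (D + 1) h (by omega)]
  | gvar a ih => intro d D h hd; simp [msubstAux]

theorem closedAt_msubstAux (σ : List GTerm) (hσ : ∀ v ∈ σ, ∃ w, v = GTerm.gvar w) :
    ∀ (w : GTerm) (d D : ℕ), GoodT σ.length D w d → ClosedAt (msubstAux σ (D + d) w) d := by
  intro w
  induction w with
  | var j =>
    intro d D h
    simp only [GoodT] at h
    rcases h with h | ⟨h1, h2⟩
    · rw [msubstAux]; rw [if_pos (by omega)]; simpa [ClosedAt]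
    · rw [msubstAux]; rw [if_neg (by omega)]
      obtain ⟨w', hw'⟩ := hσ _ (List.getElem_mem h2)
      rw [List.getD_eq_getElem _ _ h2, hw']
      simp [shiftAux, ClosedAt]
  | app a b iha ihb =>
    intro d D h
    exact ⟨iha d D h.1, ihb d D h.2⟩
  | lam a ih =>
    intro d D h
    have := ih (d + 1) D h
    show ClosedAt (msubstAux σ (D + d + 1) a) (d + 1)
    rw [show D + d + 1 = D + (d + 1) from by omega]
    exact this
  | gvar a ih => intro d D h; trivial

theorem msubstAux_cons_shift (σ : List GTerm) (hσ : ∀ v ∈ σ, ∃ w, v = GTerm.gvar w)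
    (ℓ : GTerm) : ∀ (w : GTerm) (d D : ℕ), GoodT σ.length (D + 1) w d →
    msubstAux (ℓ :: σ) (D + d) w = msubstAux σ (D + 1 + d) w := by
  intro w
  induction w with
  | var j =>
    intro d D h
    simp only [GoodT] at h
    rcases h with h | ⟨h1, h2⟩
    · rw [msubstAux, msubstAux, if_pos (by omega), if_pos (by omega)]
    · rw [msubstAux, msubstAux, if_neg (by omega), if_neg (by omega)]
      have hk : j - (D + d) = (j - (D + 1 + d)) + 1 := by omega
      rw [hk, List.getD_cons_succ]
      exact entry_eq σ hσ _ (by omega) _ _ _ _ _ _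
  | app a b iha ihb =>
    intro d D h
    simp only [msubstAux, iha d D h.1, ihb d D h.2]
  | lam a ih =>
    intro d D h
    simp only [msubstAux]
    rw [show D + d + 1 = D + (d + 1) from by omega, ih (d + 1) D h,
      show D + 1 + (d + 1) = D + 1 + d + 1 from by omega]
  | gvar a ih => intro d D h; simp [msubstAux]

theorem msubstAux_declift (σ : List GTerm) (hσ : ∀ v ∈ σ, ∃ w, v = GTerm.gvar w) :
    ∀ (w : GTerm) (d D : ℕ), GoodT σ.length D w d →
    msubstAux σ (D + d) w = msubstAux σ d (declift D w d) := by
  intro w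
  induction w with
  | var j =>
    intro d D h
    simp only [GoodT] at h
    rcases h with h | ⟨h1, h2⟩
    · rw [msubstAux, if_pos (by omega), declift, if_neg (by omega), msubstAux, if_pos h]
    · rw [msubstAux, if_neg (by omega), declift, if_pos (by omega), msubstAux,
        if_neg (by omega)]
      have hk : j - D - d = j - (D + d) := by omega
      rw [hk]
      exact entry_eq σ hσ _ (by omega) _ _ _ _ _ _
  | app a b iha ihb =>
    intro d D h
    simp only [msubstAux, declift, iha d D h.1, ihb d D h.2]
  | lam a ih =>
    intro d D h
    simp only [msubstAux, declift]
    rw [show D + d + 1 = D + (d + 1) from by omega, ih (d + 1) D h]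
  | gvar a ih => intro d D h; simp [msubstAux, declift]

theorem declift_closedAt (D : ℕ) : ∀ (w : GTerm) (d : ℕ), ClosedAt w d → declift D w d = w := by
  intro w
  induction w with
  | var j => intro d h; simp only [ClosedAt] at h; rw [declift, if_neg (by omega)]
  | app a b iha ihb => intro d h; simp [declift, iha d h.1, ihb d h.2]
  | lam a ih => intro d h; simp only [ClosedAt] at h; simp [declift, ih (d + 1) h]
  | gvar a ih => intro d h; simp [declift]

theorem closedAt_of_declift (L D : ℕ) : ∀ (w : GTerm) (d : ℕ), GoodT L D w d →
    ClosedAt (declift D w d) d → ClosedAt w d := by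
  intro w
  induction w with
  | var j =>
    intro d hg hc
    simp only [GoodT] at hg
    rcases hg with h | ⟨h1, h2⟩
    · simpa [ClosedAt]
    · rw [declift, if_pos (by omega)] at hc
      simp only [ClosedAt] at hc ⊢
      omega
  | app a b iha ihb =>
    intro d hg hc
    exact ⟨iha d hg.1 hc.1, ihb d hg.2 hc.2⟩
  | lam a ih =>
    intro d hg hc
    exact ih (d + 1) hg hc
  | gvar a ih => intro d hg hc; trivial

theorem gsize_declift (D : ℕ) : ∀ (w : GTerm) (d : ℕ), gsize (declift D w d) = gsize w := by
  intro w
  induction w with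
  | var j => intro d; rw [declift]; split <;> rfl
  | app a b iha ihb => intro d; simp [declift, gsize, iha, ihb]
  | lam a ih => intro d; simp [declift, gsize, ih]
  | gvar a ih => intro d; rfl

theorem goodT_weaken (L D : ℕ) : ∀ (w : GTerm) (d : ℕ),
    GoodT L (D + 1) w d → GoodT (L + 1) D w d := by
  intro w
  induction w with
  | var j => intro d h; simp only [GoodT] at h ⊢; omega
  | app a b iha ihb => intro d h; exact ⟨iha d h.1, ihb d h.2⟩
  | lam a ih => intro d h; exact ih (d + 1) h
  | gvar a ih => intro d h; trivial

theorem one_le_gsize (t : GTerm) : 1 ≤ gsize t := by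
  cases t <;> simp [gsize]

/-- At a position whose subterm is closed, `globalizeStep` produces the
globalization of that subterm. -/
theorem lemY : ∀ (n : ℕ) (r : GTerm) (σ : List GTerm) (hσ : ∀ v ∈ σ, ∃ w, v = GTerm.gvar w)
    (u : GTerm) (q : Pos) (w : GTerm), gsize u ≤ n → u.index q = some w → ClosedAt w 0 →
    (globalizeStep r σ hσ u).index q = some (globalize w) := by
  intro n
  induction n using Nat.strong_induction_on with
  | _ n ih =>
  intro r σ hσ u q w hn hq hw
  by_cases hc : Closed u ∨ u ∈ duplicates r
  · rw [step_pos r σ hσ u hc, glob_eq]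
    cases q with
    | nil =>
      simp only [GTerm.index, Option.some.injEq] at hq
      subst hq
      have hM : msubst σ u = u := msubstAux_closedAt σ u 0 0 hw (le_refl 0)
      rw [hM]
      simp only [GTerm.index, Option.some.injEq]
      rw [glob_eq]
    | cons d y =>
      cases u with
      | var j => simp [GTerm.index] at hq
      | gvar t => simp [GTerm.index] at hq
      | app a b =>
        have hM : msubst σ (GTerm.app a b) = GTerm.app (msubstAux σ 0 a) (msubstAux σ 0 b) := rfl
        rw [hM, scc_app]
        have hga := one_le_gsize a
        have hgb := one_le_gsize b
        have hgn : gsize a + gsize b + 1 ≤ n := hn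
        cases d with
        | left =>
          simp only [GTerm.index] at hq ⊢
          have hq' : (msubstAux σ 0 a).index y = some w := by
            rw [msubstAux_index σ hσ y a 0, hq, Option.map_some]
            exact congrArg some (msubstAux_closedAt σ w 0 _ hw (Nat.zero_le _))
          exact ih (gsize a) (by omega) _ [] (by simp) _ y w
            (le_of_eq (gsize_msubstAux σ hσ 0 a)) hq' hw
        | right =>
          simp only [GTerm.index] at hq ⊢
          have hq' : (msubstAux σ 0 b).index y = some w := by
            rw [msubstAux_index σ hσ y b 0, hq, Option.map_some]
            exact congrArg some (msubstAux_closedAt σ w 0 _ hw (Nat.zero_le _))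
          exact ih (gsize b) (by omega) _ [] (by simp) _ y w
            (le_of_eq (gsize_msubstAux σ hσ 0 b)) hq' hw
        | down => simp [GTerm.index] at hq
      | lam t =>
        have hM : msubst σ (GTerm.lam t) = GTerm.lam (msubstAux σ (0 + 1) t) := rfl
        rw [hM, scc_lam]
        have hgn : gsize t + 1 ≤ n := hn
        cases d with
        | down =>
          simp only [GTerm.index] at hq ⊢
          have hq' : (msubstAux σ (0 + 1) t).index y = some w := by
            rw [msubstAux_index σ hσ y t (0 + 1), hq, Option.map_some]
            exact congrArg some (msubstAux_closedAt σ w 0 _ hw (Nat.zero_le _))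
          exact ih (gsize t) (by omega) _ _ _ _ y w
            (le_of_eq (gsize_msubstAux σ hσ _ t)) hq' hw
        | left => simp [GTerm.index] at hq
        | right => simp [GTerm.index] at hq
  · rw [step_neg r σ hσ u hc]
    cases q with
    | nil =>
      simp only [GTerm.index, Option.some.injEq] at hq
      subst hq
      exact absurd (Or.inl ((closed_iff u).mpr hw)) hc
    | cons d y =>
      cases u with
      | var j => simp [GTerm.index] at hq
      | gvar t => simp [GTerm.index] at hq
      | app a b =>
        rw [scc_app]
        have hga := one_le_gsize a
        have hgb := one_le_gsize b
        have hgn : gsize a + gsize b + 1 ≤ n := hn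
        cases d with
        | left =>
          simp only [GTerm.index] at hq ⊢
          exact ih (gsize a) (by omega) r σ hσ a y w le_rfl hq hw
        | right =>
          simp only [GTerm.index] at hq ⊢
          exact ih (gsize b) (by omega) r σ hσ b y w le_rfl hq hw
        | down => simp [GTerm.index] at hq
      | lam t =>
        rw [scc_lam]
        have hgn : gsize t + 1 ≤ n := hn
        cases d with
        | down =>
          simp only [GTerm.index] at hq ⊢
          exact ih (gsize t) (by omega) r _ _ t y w le_rfl hq hw
        | left => simp [GTerm.index] at hq
        | right => simp [GTerm.index] at hq

/-- Main lemma: at a position whose subterm is closed or a duplicate, the result of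
`globalizeStep` is the globalization of the closed combination. -/
theorem lemM : ∀ (n : ℕ) (r : GTerm) (σ : List GTerm) (hσ : ∀ v ∈ σ, ∃ w, v = GTerm.gvar w)
    (u : GTerm) (q : Pos) (w : GTerm), gsize u ≤ n → u.index q = some w →
    GoodT σ.length (lamDepth q) w 0 → (ClosedAt w 0 ∨ w ∈ duplicates r) →
    (globalizeStep r σ hσ u).index q = some (globalize (msubstAux σ (lamDepth q) w)) := by
  intro n
  induction n using Nat.strong_induction_on with
  | _ n ih =>
  intro r σ hσ u q w hn hq hg hd
  by_cases hc : Closed u ∨ u ∈ duplicates r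
  · rw [step_pos r σ hσ u hc, glob_eq]
    cases q with
    | nil =>
      simp only [GTerm.index, Option.some.injEq] at hq
      subst hq
      simp only [GTerm.index, Option.some.injEq]
      rw [lamDepth_nil, glob_eq]
      rfl
    | cons d y =>
      cases u with
      | var j => simp [GTerm.index] at hq
      | gvar t => simp [GTerm.index] at hq
      | app a b =>
        have hM : msubst σ (GTerm.app a b) = GTerm.app (msubstAux σ 0 a) (msubstAux σ 0 b) := rfl
        rw [hM, scc_app]
        cases d with
        | left =>
          simp only [GTerm.index] at hq ⊢
          have hdL : lamDepth (Dir.left :: y) = lamDepth y := by simp [lamDepth_cons]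
          rw [hdL] at hg ⊢
          have hq' : (msubstAux σ 0 a).index y = some (msubstAux σ (lamDepth y) w) := by
            rw [msubstAux_index σ hσ y a 0, hq, Option.map_some, Nat.zero_add]
          have hw' : ClosedAt (msubstAux σ (lamDepth y) w) 0 := by
            have := closedAt_msubstAux σ hσ w 0 (lamDepth y) hg
            simpa using this
          exact lemY (gsize a) _ [] (by simp) _ y _
            (le_of_eq (gsize_msubstAux σ hσ 0 a)) hq' hw'
        | right =>
          simp only [GTerm.index] at hq ⊢
          have hdL : lamDepth (Dir.right :: y) = lamDepth y := by simp [lamDepth_cons]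
          rw [hdL] at hg ⊢
          have hq' : (msubstAux σ 0 b).index y = some (msubstAux σ (lamDepth y) w) := by
            rw [msubstAux_index σ hσ y b 0, hq, Option.map_some, Nat.zero_add]
          have hw' : ClosedAt (msubstAux σ (lamDepth y) w) 0 := by
            have := closedAt_msubstAux σ hσ w 0 (lamDepth y) hg
            simpa using this
          exact lemY (gsize b) _ [] (by simp) _ y _
            (le_of_eq (gsize_msubstAux σ hσ 0 b)) hq' hw'
        | down => simp [GTerm.index] at hq
      | lam t =>
        have hM : msubst σ (GTerm.lam t) = GTerm.lam (msubstAux σ (0 + 1) t) := rfl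
        rw [hM, scc_lam]
        cases d with
        | down =>
          simp only [GTerm.index] at hq ⊢
          have hdL : lamDepth (Dir.down :: y) = lamDepth y + 1 := by simp [lamDepth_cons]
          rw [hdL] at hg ⊢
          have hq' : (msubstAux σ (0 + 1) t).index y =
              some (msubstAux σ (lamDepth y + 1) w) := by
            rw [msubstAux_index σ hσ y t (0 + 1), hq, Option.map_some]
            exact congrArg some (by rw [show 0 + 1 + lamDepth y = lamDepth y + 1 from by omega])
          have hw' : ClosedAt (msubstAux σ (lamDepth y + 1) w) 0 := by
            have := closedAt_msubstAux σ hσ w 0 (lamDepth y + 1) hg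
            simpa using this
          exact lemY (gsize t) _ _ _ _ y _
            (le_of_eq (gsize_msubstAux σ hσ _ t)) hq' hw'
        | left => simp [GTerm.index] at hq
        | right => simp [GTerm.index] at hq
  · rw [step_neg r σ hσ u hc]
    cases q with
    | nil =>
      simp only [GTerm.index, Option.some.injEq] at hq
      subst hq
      rcases hd with hd | hd
      · exact absurd (Or.inl ((closed_iff u).mpr hd)) hc
      · exact absurd (Or.inr hd) hc
    | cons d y =>
      cases u with
      | var j => simp [GTerm.index] at hq
      | gvar t => simp [GTerm.index] at hq
      | app a b =>
        rw [scc_app]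
        have hga := one_le_gsize a
        have hgb := one_le_gsize b
        have hgn : gsize a + gsize b + 1 ≤ n := hn
        cases d with
        | left =>
          simp only [GTerm.index] at hq ⊢
          have hdL : lamDepth (Dir.left :: y) = lamDepth y := by simp [lamDepth_cons]
          rw [hdL] at hg ⊢
          exact ih (gsize a) (by omega) r σ hσ a y w le_rfl hq hg hd
        | right =>
          simp only [GTerm.index] at hq ⊢
          have hdL : lamDepth (Dir.right :: y) = lamDepth y := by simp [lamDepth_cons]
          rw [hdL] at hg ⊢
          exact ih (gsize b) (by omega) r σ hσ b y w le_rfl hq hg hd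
        | down => simp [GTerm.index] at hq
      | lam t =>
        rw [scc_lam]
        have hgn : gsize t + 1 ≤ n := hn
        cases d with
        | down =>
          simp only [GTerm.index] at hq ⊢
          have hdL : lamDepth (Dir.down :: y) = lamDepth y + 1 := by simp [lamDepth_cons]
          rw [hdL] at hg ⊢
          have hg' : GoodT (GTerm.gvar (GTerm.app r t) :: σ).length (lamDepth y) w 0 := by
            rw [List.length_cons]
            exact goodT_weaken σ.length (lamDepth y) w 0 hg
          have := ih (gsize t) (by omega) r (GTerm.gvar (GTerm.app r t) :: σ)
            (by intro v hv
                rcases List.mem_cons.mp hv with h' | h'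
                · exact ⟨_, h'⟩
                · exact hσ v h') t y w le_rfl hq hg' hd
          rw [this]
          refine congrArg some (congrArg globalize ?_)
          have := msubstAux_cons_shift σ hσ (GTerm.gvar (GTerm.app r t)) w 0 (lamDepth y) hg
          simpa using this
        | left => simp [GTerm.index] at hq
        | right => simp [GTerm.index] at hq

/-- locally closed positions with equal lifts are identified by
`globalizeStep`. -/
theorem globalizeStep_lift_eq (r : GTerm) (hr : Closed r) (p : Pos)
    (hscc : p ∈ SCC r) (u : GTerm) (hu : r.index p = some u)
    (σ : List GTerm) (hσ : ∀ v ∈ σ, ∃ w, v = GTerm.gvar w)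
    (hclosed : Closed (msubst σ u))
    (q₁ q₂ : Pos) (hq₁ : q₁ ∈ Valid u) (hq₂ : q₂ ∈ Valid u)
    (hlc₁ : LocallyClosed u q₁) (hlc₂ : LocallyClosed u q₂)
    (hlift : liftAt u q₁ = liftAt u q₂) :
    (globalizeStep r σ hσ u).index q₁ = (globalizeStep r σ hσ u).index q₂ := by
  by_cases hqq : q₁ = q₂
  · rw [hqq]
  have hq₁' : (u.index q₁).isSome := hq₁
  have hq₂' : (u.index q₂).isSome := hq₂
  obtain ⟨w₁, hw₁⟩ := Option.isSome_iff_exists.mp hq₁'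
  obtain ⟨w₂, hw₂⟩ := Option.isSome_iff_exists.mp hq₂'
  have hD : declift (lamDepth q₁) w₁ 0 = declift (lamDepth q₂) w₂ 0 := by
    have h := hlift
    rw [liftAt, liftAt, hw₁, hw₂] at h
    simpa using h
  -- Good property at any locally closed position
  have hgood : ∀ (q : Pos) (w : GTerm), u.index q = some w → LocallyClosed u q →
      GoodT σ.length (lamDepth q) w 0 := by
    intro q w hw hlc
    apply goodT_of_forall
    intro z i hz
    rcases Nat.lt_or_ge i (lamDepth z) with hlt | hge
    · left; omega
    · right
      have hfu : (q ++ z) ∈ Free u := hlc.2 w hw z ⟨i, hz, hge⟩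
      obtain ⟨i', hi', hle'⟩ := hfu
      have hqz : u.index (q ++ z) = some (.var i) := by
        rw [index_append, hw]; exact hz
      rw [hqz, Option.some.injEq, GTerm.var.injEq] at hi'
      subst hi'
      rw [lamDepth_append] at hle'
      refine ⟨by omega, ?_⟩
      by_contra hrange
      push_neg at hrange
      have hidx2 : (msubst σ u).index (q ++ z) = some (.var i) := by
        rw [msubst, msubstAux_index σ hσ (q ++ z) u 0, hqz, Option.map_some]
        refine congrArg some ?_
        simp only [msubstAux]
        rw [if_neg (by rw [lamDepth_append]; omega)]
        rw [List.getD_eq_default _ _ (by rw [lamDepth_append]; omega)]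
        simp only [shiftAux]
        rw [if_neg (by omega)]
        exact congrArg GTerm.var (by rw [lamDepth_append]; omega)
      have hmem : (q ++ z) ∈ Free (msubst σ u) :=
        ⟨i, hidx2, by rw [lamDepth_append]; omega⟩
      rw [Closed] at hclosed
      rw [hclosed] at hmem
      exact hmem
  have hg₁ := hgood q₁ w₁ hw₁ hlc₁
  have hg₂ := hgood q₂ w₂ hw₂ hlc₂
  -- the closed combinations agree
  have hC : msubstAux σ (lamDepth q₁) w₁ = msubstAux σ (lamDepth q₂) w₂ := by
    have h1 := msubstAux_declift σ hσ w₁ 0 (lamDepth q₁) hg₁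
    have h2 := msubstAux_declift σ hσ w₂ 0 (lamDepth q₂) hg₂
    simp only [Nat.add_zero] at h1 h2
    rw [h1, h2, hD]
  by_cases hcl : ClosedAt w₁ 0
  · -- both subterms closed
    have hcl₂ : ClosedAt w₂ 0 := by
      refine closedAt_of_declift σ.length (lamDepth q₂) w₂ 0 hg₂ ?_
      rw [← hD, declift_closedAt (lamDepth q₁) w₁ 0 hcl]
      exact hcl
    rw [lemM (gsize u) r σ hσ u q₁ w₁ le_rfl hw₁ hg₁ (Or.inl hcl),
        lemM (gsize u) r σ hσ u q₂ w₂ le_rfl hw₂ hg₂ (Or.inl hcl₂), hC]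
  · -- both subterms open: use the duplicates mechanism
    have hcl₂ : ¬ClosedAt w₂ 0 := by
      intro h2
      refine hcl (closedAt_of_declift σ.length (lamDepth q₁) w₁ 0 hg₁ ?_)
      rw [hD, declift_closedAt (lamDepth q₂) w₂ 0 h2]
      exact h2
    -- SCC membership of p ++ q for open locally-closed positions
    have hsccq : ∀ (q : Pos) (w : GTerm), u.index q = some w → LocallyClosed u q →
        ¬ClosedAt w 0 → (p ++ q) ∈ SCC r := by
      intro q w hw hlc hop
      obtain ⟨z₀, i₀, hz₀, hfz₀⟩ := not_closedAt w hop
      have hfree : ∀ (a b : Pos), q = a ++ b → ∃ ww, u.index a = some ww ∧ ¬Closed ww := by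
        intro a b hab
        have hqa : u.index (a ++ b) = some w := by rw [← hab]; exact hw
        rw [index_append] at hqa
        cases hua : u.index a with
        | none => rw [hua] at hqa; simp at hqa
        | some ww =>
          refine ⟨ww, rfl, ?_⟩
          rw [hua] at hqa
          have hqa' : ww.index b = some w := hqa
          intro hcww
          have hi : ww.index (b ++ z₀) = some (.var i₀) := by
            rw [index_append, hqa']; exact hz₀
          have hle : lamDepth (b ++ z₀) ≤ i₀ := by
            have hfu : (q ++ z₀) ∈ Free u := hlc.2 w hw z₀ ⟨i₀, hz₀, hfz₀⟩
            obtain ⟨i', hi', hle'⟩ := hfu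
            have hqz : u.index (q ++ z₀) = some (.var i₀) := by
              rw [index_append, hw]; exact hz₀
            rw [hqz, Option.some.injEq, GTerm.var.injEq] at hi'
            subst hi'
            rw [hab, lamDepth_append, lamDepth_append] at hle'
            rw [lamDepth_append]
            omega
          have hmem : (b ++ z₀) ∈ Free ww := ⟨i₀, hi, hle⟩
          rw [Closed] at hcww
          rw [hcww] at hmem
          exact hmem
      constructor
      · show (r.index (p ++ q)).isSome
        rw [index_append, hu]
        have h' : (u.index q).isSome := by rw [hw]; rfl
        exact h'
      · intro p' u' hne hpre hidx
        rcases le_or_gt p'.length p.length with hl | hl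
        · have hp' : p' <+: p :=
            List.prefix_of_prefix_length_le hpre (p.prefix_append q) hl
          exact hscc.2 p' u' hne hp' hidx
        · have hp : p <+: p' :=
            List.prefix_of_prefix_length_le (p.prefix_append q) hpre (by omega)
          obtain ⟨a, rfl⟩ := hp
          have hab : a <+: q := (List.prefix_append_right_inj p).mp hpre
          obtain ⟨b, hb⟩ := hab
          obtain ⟨ww, hwa, hopen⟩ := hfree a b hb.symm
          have hrw : r.index (p ++ a) = some ww := by
            rw [index_append, hu]; exact hwa
          rw [hidx, Option.some.injEq] at hrw
          rw [hrw]
          exact hopen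
      -- done SCC helper
    have hne₁ : p ++ q₁ ≠ [] := by
      intro h
      obtain ⟨hp0, hq0⟩ := List.append_eq_nil_iff.mp h
      subst hp0; subst hq0
      simp only [GTerm.index, Option.some.injEq] at hu hw₁
      have hru : r = w₁ := hu.trans hw₁
      rw [← hru] at hcl
      exact hcl ((closed_iff r).mp hr)
    have hne₂ : p ++ q₂ ≠ [] := by
      intro h
      obtain ⟨hp0, hq0⟩ := List.append_eq_nil_iff.mp h
      subst hp0; subst hq0
      simp only [GTerm.index, Option.some.injEq] at hu hw₂
      have hru : r = w₂ := hu.trans hw₂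
      rw [← hru] at hcl₂
      exact hcl₂ ((closed_iff r).mp hr)
    have hnee : p ++ q₁ ≠ p ++ q₂ := fun h => hqq (List.append_cancel_left h)
    have hidx₁ : r.index (p ++ q₁) = some w₁ := by
      rw [index_append, hu]; exact hw₁
    have hidx₂ : r.index (p ++ q₂) = some w₂ := by
      rw [index_append, hu]; exact hw₂
    have hsize : gsize w₁ = gsize w₂ := by
      have h1 := gsize_declift (lamDepth q₁) w₁ 0
      have h2 := gsize_declift (lamDepth q₂) w₂ 0
      rw [← h1, ← h2, hD]
    have hs₁ := hsccq q₁ w₁ hw₁ hlc₁ hcl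
    have hs₂ := hsccq q₂ w₂ hw₂ hlc₂ hcl₂
    have hd₁ : w₁ ∈ duplicates r :=
      ⟨p ++ q₁, p ++ q₂, w₂, hs₁, hs₂, hne₁, hne₂, hnee, hidx₁, hidx₂, hsize⟩
    have hd₂ : w₂ ∈ duplicates r :=
      ⟨p ++ q₂, p ++ q₁, w₁, hs₂, hs₁, hne₂, hne₁, fun h => hnee h.symm, hidx₂, hidx₁,
        hsize.symm⟩
    rw [lemM (gsize u) r σ hσ u q₁ w₁ le_rfl hw₁ hg₁ (Or.inr hd₁),
        lemM (gsize u) r σ hσ u q₂ w₂ le_rfl hw₂ hg₂ (Or.inr hd₂), hC]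

end HashAlpha
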